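/- Let x, y ∈ ℝ^n and suppose there exists an index j with y_j > x_j and y_i ≥ min{x_i, x_j} for all i. Then the vector z := (x+y)/2 lexicographically dominates x, where vectors are compared by first sorting their entries non-decreasingly and then comparing lexicographically (i.e., the sorted version of z is strictly greater in lexicographic order than the sorted version of x). -/

import Mathlib

open Finset

/-- The non-decreasing rearrangement of `v`. -/
noncomputable def sortedVec (n : ℕ) (v : Fin n → ℝ) : Fin n → ℝ := v ∘ Tuple.sort v

/-- `z` lexicographically dominates `x`: the sorted version of `z` is strictly greater
than the sorted version of `x` in the lexicographic order. -/
noncomputable def LexDom (n : ℕ) (z x : Fin n → ℝ) : Prop :=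
  toLex (sortedVec n x) < toLex (sortedVec n z)

/-- If `y j > x j` for some `j` and `y i ≥ min (x i) (x j)` for all `i`, then the midpoint
`(x + y) / 2` lexicographically dominates `x`. -/
private lemma card_ge_of_sorted {n : ℕ} (π : Equiv.Perm (Fin n)) (P : Fin n → Prop)
    [DecidablePred P] (k : Fin n) (h : ∀ l ≤ k, P (π l)) :
    (k : ℕ) + 1 ≤ (univ.filter P).card := by
  have hsub : (Finset.Iic k).image π ⊆ univ.filter P := by
    intro i hi
    simp only [mem_image, Finset.mem_Iic] at hi
    obtain ⟨l, hl, rfl⟩ := hi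
    simp [h l hl]
  calc (k : ℕ) + 1 = ((Finset.Iic k).image π).card := by
        rw [Finset.card_image_of_injective _ π.injective, Fin.card_Iic]
    _ ≤ _ := Finset.card_le_card hsub

private lemma card_le_of_sorted {n : ℕ} (π : Equiv.Perm (Fin n)) (P : Fin n → Prop)
    [DecidablePred P] (k : Fin n) (h : ∀ l, P (π l) → l < k) :
    (univ.filter P).card ≤ (k : ℕ) := by
  have hsub : univ.filter P ⊆ (Finset.Iio k).image π := by
    intro i hi
    simp only [mem_filter] at hi
    refine Finset.mem_image.2 ⟨π.symm i, ?_, by simp⟩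
    simpa using h (π.symm i) (by simpa using hi.2)
  calc (univ.filter P).card ≤ ((Finset.Iio k).image π).card := Finset.card_le_card hsub
    _ = k := by rw [Finset.card_image_of_injective _ π.injective, Fin.card_Iio]
theorem midpoint_lexDom (n : ℕ) (x y : Fin n → ℝ) (j : Fin n)
    (hj : x j < y j) (hmin : ∀ i : Fin n, min (x i) (x j) ≤ y i) :
    LexDom n (fun i => (x i + y i) / 2) x := by
  classical
  set z : Fin n → ℝ := fun i => (x i + y i) / 2 with hzdef
  set T : ℝ := x j with hT
  set a : Fin n → ℝ := sortedVec n x with hadef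
  set b : Fin n → ℝ := sortedVec n z with hbdef
  have ha : Monotone a := Tuple.monotone_sort x
  have hb : Monotone b := Tuple.monotone_sort z
  -- basic pointwise facts
  have hz1 : ∀ i, x i ≤ T → x i ≤ z i := by
    intro i hi
    have := hmin i
    rw [min_eq_left hi] at this
    simp only [hzdef]; linarith
  have hz2 : ∀ i, T < x i → T < z i := by
    intro i hi
    have := hmin i
    rw [min_eq_right hi.le] at this
    simp only [hzdef]; linarith
  have hzj : T < z j := by simp only [hzdef]; linarith
  set S : Finset (Fin n) := univ.filter (fun i => x i ≤ T) with hS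
  have hjS : j ∈ S := by simp [hS, hT]
  have hm1 : 1 ≤ S.card := Finset.card_pos.2 ⟨j, hjS⟩
  have hmn : S.card ≤ n := by
    simpa using Finset.card_le_card (Finset.subset_univ S)
  set K : Fin n := ⟨S.card - 1, by omega⟩ with hK
  have hKval : (K : ℕ) + 1 = S.card := by simp [hK]; omega
  -- a K ≤ T
  have haK : a K ≤ T := by
    by_contra hcon
    push_neg at hcon
    have : S.card ≤ (K : ℕ) := by
      refine card_le_of_sorted (Tuple.sort x) _ K ?_
      intro l hl
      by_contra hlk
      push_neg at hlk
      have : a K ≤ a l := ha hlk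
      simp only [hS, hadef, sortedVec, Function.comp] at *
      linarith
    omega
  -- T < b K
  have hbK : T < b K := by
    by_contra hcon
    push_neg at hcon
    have h1 : (K : ℕ) + 1 ≤ (univ.filter (fun i => z i ≤ T)).card := by
      refine card_ge_of_sorted (Tuple.sort z) _ K ?_
      intro l hl
      have : b l ≤ b K := hb hl
      simp only [hbdef, sortedVec, Function.comp] at *
      linarith
    have h2 : univ.filter (fun i => z i ≤ T) ⊆ S.erase j := by
      intro i hi
      simp only [mem_filter] at hi
      refine Finset.mem_erase.2 ⟨?_, ?_⟩
      · rintro rfl; linarith [hi.2]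
      · simp only [hS, mem_filter, Finset.mem_univ, true_and]
        by_contra hx
        push_neg at hx
        linarith [hz2 i hx, hi.2]
    have h3 : (S.erase j).card = S.card - 1 := Finset.card_erase_of_mem hjS
    have := Finset.card_le_card h2
    omega
  -- ∀ k ≤ K, a k ≤ b k
  have hab : ∀ k, k ≤ K → a k ≤ b k := by
    intro k hk
    by_contra hcon
    push_neg at hcon
    have hcT : a k ≤ T := le_trans (ha hk) haK
    have h1 : (k : ℕ) + 1 ≤ (univ.filter (fun i => z i < a k)).card := by
      refine card_ge_of_sorted (Tuple.sort z) _ k ?_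
      intro l hl
      have : b l ≤ b k := hb hl
      simp only [hbdef, sortedVec, Function.comp] at *
      linarith
    have h2 : univ.filter (fun i => z i < a k) ⊆ univ.filter (fun i => x i < a k) := by
      intro i hi
      simp only [mem_filter] at hi ⊢
      refine ⟨Finset.mem_univ i, ?_⟩
      rcases le_or_gt (x i) T with h | h
      · linarith [hz1 i h, hi.2]
      · linarith [hz2 i h, hi.2]
    have h3 : (univ.filter (fun i => x i < a k)).card ≤ (k : ℕ) := by
      refine card_le_of_sorted (Tuple.sort x) _ k ?_
      intro l hl
      by_contra hlk
      push_neg at hlk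
      have : a k ≤ a l := ha hlk
      simp only [hadef, sortedVec, Function.comp] at *
      linarith
    have := Finset.card_le_card h2
    omega
  -- conclude lex
  have hKne : a K ≠ b K := by intro h; rw [h] at haK; linarith
  have hne : {k : Fin n | a k ≠ b k}.Nonempty := ⟨K, hKne⟩
  obtain ⟨k0, hk0mem, hk0min⟩ :=
    Set.exists_min_image _ id (Set.toFinite _) hne
  have hk0K : k0 ≤ K := hk0min K hKne
  have heq : ∀ l, l < k0 → a l = b l := by
    intro l hl
    by_contra hc
    exact absurd (hk0min l hc) (by simpa using hl.not_ge)
  have hlt : a k0 < b k0 := lt_of_le_of_ne (hab k0 hk0K) hk0mem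
  exact ⟨k0, heq, hlt⟩
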